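/- For n, m ≥ 3 with n > m−2, there is a red/blue coloring of K_{2n} ⊔ K_{1,n} with no red K_{1,n} and no blue K_{1,m}+e: take red graph 2K_n, blue graph K_{n,n}, and join the extra vertex in blue to all n vertices of one part. -/

import Mathlib

open SimpleGraph

/-- `Contains G H` : the graph `G` contains a copy of `H`. -/
def Contains {V W : Type*} (G : SimpleGraph V) (H : SimpleGraph W) : Prop :=
  ∃ f : W → V, Function.Injective f ∧ ∀ a b, H.Adj a b → G.Adj (f a) (f b)

/-- The star `K_{1,n}` on `n+1` vertices: vertex `0` is joined to all others. -/
def starG (n : ℕ) : SimpleGraph (Fin (n + 1)) :=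
  SimpleGraph.fromRel (fun a _ => a = 0)

/-- `K_{1,m}+e` on `m+1` vertices: vertex `0` joined to all others, plus the edge `{1,2}`. -/
def starPlusE (m : ℕ) : SimpleGraph (Fin (m + 1)) :=
  SimpleGraph.fromRel (fun a b => a = 0 ∨ (a = 1 ∧ b = 2))

/-- `K_N ⊔ K_{1,k}` : complete graph on the first `N` vertices of `Fin (N+1)`,
with the last vertex joined to exactly the `k` vertices of value `< k`. -/
def KstarK1 (N k : ℕ) : SimpleGraph (Fin (N + 1)) :=
  SimpleGraph.fromRel (fun a b => (a.val < N ∧ b.val < N) ∨ (a.val = N ∧ b.val < k))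

/-- `ArrowsHost Host G H` : every red/blue coloring of the edges of `Host`
contains a red copy of `G` or a blue copy of `H`. -/
def ArrowsHost {V W₁ W₂ : Type*} (Host : SimpleGraph V)
    (G : SimpleGraph W₁) (H : SimpleGraph W₂) : Prop :=
  ∀ R : SimpleGraph V, R ≤ Host → Contains R G ∨ Contains (Host \ R) H

theorem stmt_15 (n m : ℕ) (hn : 3 ≤ n) (hm : 3 ≤ m) (hmn : m < n + 2) :
    (SimpleGraph.fromRel (fun a b : Fin (2 * n + 1) =>
        (a.val < n ∧ b.val < n) ∨
        (n ≤ a.val ∧ a.val < 2 * n ∧ n ≤ b.val ∧ b.val < 2 * n)))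
      ≤ KstarK1 (2 * n) n ∧
    ¬ Contains (SimpleGraph.fromRel (fun a b : Fin (2 * n + 1) =>
        (a.val < n ∧ b.val < n) ∨
        (n ≤ a.val ∧ a.val < 2 * n ∧ n ≤ b.val ∧ b.val < 2 * n))) (starG n) ∧
    ¬ Contains (KstarK1 (2 * n) n \ SimpleGraph.fromRel (fun a b : Fin (2 * n + 1) =>
        (a.val < n ∧ b.val < n) ∨
        (n ≤ a.val ∧ a.val < 2 * n ∧ n ≤ b.val ∧ b.val < 2 * n))) (starPlusE m) := by
  refine ⟨?_, ?_, ?_⟩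
  · intro a b hab
    simp only [SimpleGraph.fromRel_adj] at hab
    obtain ⟨hne, h⟩ := hab
    simp only [KstarK1, SimpleGraph.fromRel_adj]
    exact ⟨hne, Or.inl (Or.inl (by omega))⟩
  · rintro ⟨f, hf, hadj⟩
    have h0 : ∀ i : Fin (n + 1), i ≠ 0 →
        (f 0).val ≠ (f i).val ∧
        (((f 0).val < n ∧ (f i).val < n) ∨
          (n ≤ (f 0).val ∧ (f 0).val < 2 * n ∧ n ≤ (f i).val ∧ (f i).val < 2 * n)) := by
      intro i hi
      have h := hadj 0 i (by
        simp only [starG, SimpleGraph.fromRel_adj]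
        exact ⟨fun h => hi h.symm, Or.inl trivial⟩)
      simp only [SimpleGraph.fromRel_adj] at h
      obtain ⟨hne, hd⟩ := h
      exact ⟨fun hv => hne (Fin.ext hv), by omega⟩
    have i1 : Fin (n + 1) := ⟨1, by omega⟩
    have hi1 : (⟨1, by omega⟩ : Fin (n + 1)) ≠ 0 := by
      simp [Fin.ext_iff]
    by_cases hc : (f 0).val < n
    · have hall : ∀ i, (f i).val < n := by
        intro i
        by_cases hi : i = 0
        · subst hi; exact hc
        · have := (h0 i hi).2; omega
      have hginj : Function.Injective (fun i : Fin (n + 1) => (⟨(f i).val, hall i⟩ : Fin n)) := by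
        intro i j hij
        apply hf
        have := congrArg Fin.val hij
        simp only at this
        exact Fin.ext this
      have := Fintype.card_le_of_injective _ hginj
      simp only [Fintype.card_fin] at this
      omega
    · have h00 : n ≤ (f 0).val ∧ (f 0).val < 2 * n := by
        have := h0 ⟨1, by omega⟩ hi1
        omega
      have hall : ∀ i, n ≤ (f i).val ∧ (f i).val < 2 * n := by
        intro i
        by_cases hi : i = 0
        · subst hi; exact h00
        · have := (h0 i hi).2; omega
      have hginj : Function.Injective
          (fun i : Fin (n + 1) => (⟨(f i).val - n, by have := hall i; omega⟩ : Fin n)) := by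
        intro i j hij
        apply hf
        have := congrArg Fin.val hij
        simp only at this
        have hi := hall i
        have hj := hall j
        exact Fin.ext (by omega)
      have := Fintype.card_le_of_injective _ hginj
      simp only [Fintype.card_fin] at this
      omega
  · rintro ⟨f, hf, hadj⟩
    obtain ⟨m', rfl⟩ : ∃ m', m = m' + 3 := ⟨m - 3, by omega⟩
    have key : ∀ x y : Fin (2 * n + 1),
        (KstarK1 (2 * n) n \ SimpleGraph.fromRel (fun a b : Fin (2 * n + 1) =>
          (a.val < n ∧ b.val < n) ∨
          (n ≤ a.val ∧ a.val < 2 * n ∧ n ≤ b.val ∧ b.val < 2 * n))).Adj x y →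
        ((x.val < n) ↔ ¬ (y.val < n)) := by
      intro x y hxy
      rw [SimpleGraph.sdiff_adj] at hxy
      obtain ⟨hH, hR⟩ := hxy
      simp only [KstarK1, SimpleGraph.fromRel_adj] at hH
      simp only [SimpleGraph.fromRel_adj, not_and, not_or] at hR
      obtain ⟨hne, hdisj⟩ := hH
      have hR' := hR hne
      have hx := x.isLt
      have hy := y.isLt
      omega
    have h01 : (starPlusE (m' + 3)).Adj 0 1 := by
      simp only [starPlusE, SimpleGraph.fromRel_adj]
      exact ⟨by simp [Fin.ext_iff], Or.inl (Or.inl trivial)⟩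
    have h02 : (starPlusE (m' + 3)).Adj 0 2 := by
      simp only [starPlusE, SimpleGraph.fromRel_adj]
      exact ⟨by simp [Fin.ext_iff]; rw [Nat.mod_eq_of_lt (show 2 < m' + 3 + 1 by omega)]; omega, Or.inl (Or.inl trivial)⟩
    have h12 : (starPlusE (m' + 3)).Adj 1 2 := by
      simp only [starPlusE, SimpleGraph.fromRel_adj]
      refine ⟨by simp [Fin.ext_iff]; rw [Nat.mod_eq_of_lt (show 2 < m' + 3 + 1 by omega)]; omega, Or.inl (Or.inr ⟨trivial, trivial⟩)⟩
    have k01 := key _ _ (hadj 0 1 h01)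
    have k02 := key _ _ (hadj 0 2 h02)
    have k12 := key _ _ (hadj 1 2 h12)
    tauto
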